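/- No two-grammar system admits stable variation: for all advantages a₁, a₂ > 0, there is no point p with 0 < p < 1 that is both a fixed point of the two-grammar Variational Learning map f(p) = a₁p / (a₁p + a₂(1−p)) and asymptotically stable. (If a₁ ≠ a₂ there are no interior fixed points at all; if a₁ = a₂ every interior point is fixed but none is asymptotically stable.) -/

import Mathlib

open Filter Topology

theorem stmt_3 (a₁ a₂ : ℝ) (ha₁ : 0 < a₁) (ha₂ : 0 < a₂)
    (f : ℝ → ℝ) (hf : ∀ p, f p = a₁ * p / (a₁ * p + a₂ * (1 - p))) :
    ¬ ∃ p : ℝ, 0 < p ∧ p < 1 ∧ f p = p ∧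
      ∃ U ∈ 𝓝[Set.Icc (0 : ℝ) 1] p, ∀ q ∈ U,
        Tendsto (fun n => f^[n] q) atTop (𝓝 p) := by
  rintro ⟨p, hp0, hp1, hfp, U, hU, hconv⟩
  -- From the fixed point equation, a₁ = a₂
  have hden : a₁ * p + a₂ * (1 - p) > 0 := by nlinarith
  have heq : a₁ = a₂ := by
    rw [hf] at hfp
    have h1 : a₁ * p = p * (a₁ * p + a₂ * (1 - p)) := by
      field_simp at hfp
      linear_combination p * hfp
    have h2 : a₁ = a₁ * p + a₂ * (1 - p) :=
      mul_left_cancel₀ (ne_of_gt hp0) (by linarith [h1])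
    have h3 : (1 - p) * a₁ = (1 - p) * a₂ := by ring_nf; nlinarith [h2]
    exact mul_left_cancel₀ (by linarith : (1:ℝ) - p ≠ 0) h3
  -- Hence f is the identity on (0,1)
  have hid : ∀ q : ℝ, 0 < q → q < 1 → f q = q := by
    intro q hq0 hq1
    rw [hf, heq]
    have : a₂ * q + a₂ * (1 - q) = a₂ := by ring
    rw [this]
    field_simp
  -- U is a neighborhood of p (since Icc 0 1 is a neighborhood of p)
  have hIcc : Set.Icc (0:ℝ) 1 ∈ 𝓝 p :=
    mem_of_superset (Ioo_mem_nhds hp0 hp1) Set.Ioo_subset_Icc_self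
  have hU' : U ∈ 𝓝 p := by
    rw [nhdsWithin_eq_nhds.mpr hIcc] at hU
    exact hU
  obtain ⟨ε, hε, hball⟩ := Metric.mem_nhds_iff.mp hU'
  -- pick q ≠ p near p inside (0,1)
  set δ := min (ε / 2) (p / 2) with hδdef
  have hδ : 0 < δ := by positivity
  set q := p - δ with hqdef
  have hq0 : 0 < q := by
    have : δ ≤ p / 2 := min_le_right _ _
    simp only [hqdef]; linarith
  have hq1 : q < 1 := by simp only [hqdef]; linarith
  have hqU : q ∈ U := by
    apply hball
    simp only [Metric.mem_ball, Real.dist_eq, hqdef]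
    have : δ ≤ ε / 2 := min_le_left _ _
    rw [abs_of_nonpos (by linarith)]
    linarith
  have hiter : ∀ n, f^[n] q = q := fun n =>
    Function.iterate_fixed (hid q hq0 hq1) n
  have hconvq := hconv q hqU
  simp only [hiter] at hconvq
  have : q = p := (tendsto_nhds_unique hconvq tendsto_const_nhds).symm
  simp only [hqdef] at this
  linarith
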